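/- If f ∈ L^1(V_{n,m}) and 1 ≤ k, m ≤ n-1 with k+m ≤ n, then (F_{m,k} f)(u) exists as an absolutely convergent integral for almost all u ∈ V_{n,k}, and ∫_{V_{n,k}} (F_{m,k} f)(u) d_*u = ∫_{V_{n,m}} f(v) d_*v. -/

import Mathlib

open MeasureTheory Matrix
open scoped Real ENNReal NNReal

noncomputable section

abbrev Mat (n m : ℕ) := Matrix (Fin n) (Fin m) ℝ

instance (n m : ℕ) : MeasurableSpace (Mat n m) :=
  inferInstanceAs (MeasurableSpace (Fin n → Fin m → ℝ))

/-- Lebesgue measure on the space of real `n × m` matrices. -/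
def matVolume (n m : ℕ) : Measure (Mat n m) :=
  (volume : Measure (Fin n → Fin m → ℝ))

/-- Symmetric matrix built from independent coordinates `(i,j)`, `i ≤ j`. -/
def symOfCoords (m : ℕ) (c : {p : Fin m × Fin m // p.1 ≤ p.2} → ℝ) :
    Matrix (Fin m) (Fin m) ℝ :=
  Matrix.of fun i j => if h : i ≤ j then c ⟨(i, j), h⟩ else c ⟨(j, i), le_of_not_ge h⟩

/-- Lebesgue measure `dr = ∏_{i ≤ j} dr_{i,j}` on symmetric `m × m` matrices. -/
def symMeasure (m : ℕ) : Measure (Matrix (Fin m) (Fin m) ℝ) :=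
  Measure.map (symOfCoords m) volume

/-- Siegel gamma function (complex argument). -/
def SiegelGamma (m : ℕ) (α : ℂ) : ℂ :=
  (Real.pi : ℂ) ^ (((m : ℂ) * ((m : ℂ) - 1)) / 4) *
    ∏ j ∈ Finset.range m, Complex.Gamma (α - (j : ℂ) / 2)

/-- Siegel gamma function (real argument). -/
def SiegelGammaR (m : ℕ) (α : ℝ) : ℝ :=
  Real.pi ^ (((m : ℝ) * ((m : ℝ) - 1)) / 4) *
    ∏ j ∈ Finset.range m, Real.Gamma (α - (j : ℝ) / 2)

/-- `i`-th leading principal minor. -/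
def pminor {m : ℕ} (s : Matrix (Fin m) (Fin m) ℝ) (i : ℕ) : ℝ :=
  (Matrix.of fun a b : Fin (min i m) =>
    s (Fin.castLE (min_le_right i m) a) (Fin.castLE (min_le_right i m) b)).det

/-- Composite power function `s^λ` of the cone of positive definite matrices. -/
def cpowCone {m : ℕ} (s : Matrix (Fin m) (Fin m) ℝ) (lam : Fin m → ℂ) : ℂ :=
  ∏ i : Fin m, ((pminor s ((i : ℕ) + 1) / pminor s (i : ℕ) : ℝ) : ℂ) ^ (lam i / 2)

/-- Gamma function of the cone, for composite parameters. -/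
def GammaOmega (m : ℕ) (lam : Fin m → ℂ) : ℂ :=
  (Real.pi : ℂ) ^ (((m : ℂ) * ((m : ℂ) - 1)) / 4) *
    ∏ j : Fin m, Complex.Gamma ((lam j - (j : ℂ)) / 2)

/-- The antidiagonal permutation matrix ω. -/
def antidiag (m : ℕ) : Matrix (Fin m) (Fin m) ℝ :=
  Matrix.of fun i j => if j = i.rev then 1 else 0

/-- `μ` is the invariant probability measure of the Stiefel manifold `V_{n,m}`,
realized as a measure on the ambient matrix space. -/
def IsStiefelMeasure (n m : ℕ) (μ : Measure (Mat n m)) : Prop :=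
  IsProbabilityMeasure μ ∧ μ {v : Mat n m | vᵀ * v = 1}ᶜ = 0 ∧
    ∀ g : Mat n n, gᵀ * g = 1 → Measure.map (fun v : Mat n m => g * v) μ = μ

/-- A family of measures realizing the Funk transform: `ν u` is the normalized
invariant measure on `{w ∈ V_{n,q} : uᵀ w = 0}`. -/
def IsFunkFamily (n p q : ℕ) (ν : Mat n p → Measure (Mat n q)) : Prop :=
  (∀ u, IsProbabilityMeasure (ν u)) ∧
  (∀ u : Mat n p, ν u {w : Mat n q | wᵀ * w = 1 ∧ uᵀ * w = 0}ᶜ = 0) ∧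
  (∀ g : Mat n n, gᵀ * g = 1 → ∀ u, Measure.map (fun w : Mat n q => g * w) (ν u) = ν (g * u))


/-- Vertical block matrix `[a; b]` of sizes `(n-m) × m` over `m × m`. -/
def vblock (n m : ℕ) (a : Matrix (Fin (n - m)) (Fin m) ℝ)
    (b : Matrix (Fin m) (Fin m) ℝ) : Mat n m :=
  Matrix.of fun i j =>
    if hi : (i : ℕ) < n - m then a ⟨(i : ℕ), hi⟩ j
    else b ⟨(i : ℕ) - (n - m), by omega⟩ j

/-- The block frame `[[a, 0], [0, I_m]]` of size `n × k`. -/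
def blockFrame (n m k : ℕ) (a : Matrix (Fin (n - m)) (Fin (k - m)) ℝ) :
    Mat n k :=
  Matrix.of fun i j =>
    if hi : (i : ℕ) < n - m then
      if hj : (j : ℕ) < k - m then a ⟨(i : ℕ), hi⟩ ⟨(j : ℕ), hj⟩ else 0
    else if (i : ℕ) - (n - m) = (j : ℕ) - (k - m) ∧ ¬ ((j : ℕ) < k - m) then 1 else 0

/-- The cosine kernel `det(vᵀ u uᵀ v)^{(α-k)/2}`. -/
def cosineKer (n m k : ℕ) (α : ℂ) (u : Mat n k) (v : Mat n m) : ℂ :=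
  (((vᵀ * u * uᵀ * v).det : ℝ) : ℂ) ^ ((α - (k : ℂ)) / 2)

/-- The sine transform `Q^α` on `V_{n,m}`. -/
def sineT (n m : ℕ) (μm : Measure (Mat n m)) (α : ℂ) (f : Mat n m → ℂ)
    (u : Mat n m) : ℂ :=
  ∫ v, f v * (((1 - vᵀ * u * uᵀ * v).det : ℝ) : ℂ) ^ ((α + (m : ℂ) - (n : ℂ)) / 2) ∂μm

/-- The sine transform `S^α_{m,k}` from `V_{n,m}` to `V_{n,k}`. -/
def sineS (n m k : ℕ) (μm : Measure (Mat n m)) (α : ℂ) (f : Mat n m → ℂ)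
    (u : Mat n k) : ℂ :=
  ∫ v, f v * (((1 - vᵀ * u * uᵀ * v).det : ℝ) : ℂ) ^ ((α + (k : ℂ) - (n : ℂ)) / 2) ∂μm

/-- The cosine transform `M^α` on `V_{n,m}`. -/
def cosM (n m : ℕ) (μm : Measure (Mat n m)) (α : ℂ) (f : Mat n m → ℂ)
    (w : Mat n m) : ℂ :=
  ∫ v, f v * (((vᵀ * w * wᵀ * v).det : ℝ) : ℂ) ^ ((α - (m : ℂ)) / 2) ∂μm


open Filter Topology Set
open scoped RealInnerProductSpace

instance (n m : ℕ) : BorelSpace (Mat n m) :=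
  inferInstanceAs (BorelSpace (Fin n → Fin m → ℝ))
instance (n m : ℕ) : PolishSpace (Mat n m) :=
  inferInstanceAs (PolishSpace (Fin n → Fin m → ℝ))
instance (n m : ℕ) : LocallyCompactSpace (Mat n m) :=
  inferInstanceAs (LocallyCompactSpace (Fin n → Fin m → ℝ))

abbrev OG (n : ℕ) : Type := {g : Mat n n // gᵀ * g = 1}

namespace OG
variable {n : ℕ}

instance : Group (OG n) where
  mul a b := ⟨a.1 * b.1, by
    have ha := a.2; have hb := b.2
    rw [transpose_mul, Matrix.mul_assoc, ← Matrix.mul_assoc a.1ᵀ, ha, Matrix.one_mul, hb]⟩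
  one := ⟨1, by simp⟩
  inv g := ⟨g.1ᵀ, by rw [transpose_transpose, mul_eq_one_comm.mp g.2]⟩
  mul_assoc a b c := Subtype.ext (Matrix.mul_assoc _ _ _)
  one_mul a := Subtype.ext (Matrix.one_mul _)
  mul_one a := Subtype.ext (Matrix.mul_one _)
  inv_mul_cancel g := Subtype.ext g.2

lemma coe_mul (a b : OG n) : (a * b : OG n).1 = a.1 * b.1 := rfl
lemma coe_one : (1 : OG n).1 = 1 := rfl

lemma isClosed_carrier : IsClosed {g : Mat n n | gᵀ * g = 1} :=
  isClosed_eq ((continuous_id.matrix_transpose).matrix_mul continuous_id) continuous_const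

instance : BorelSpace (OG n) := by
  have : MeasurableSet {g : Mat n n | gᵀ * g = 1} := isClosed_carrier.measurableSet
  exact Subtype.borelSpace _

instance : PolishSpace (OG n) := IsClosed.polishSpace (isClosed_carrier (n := n))

lemma continuous_coe : Continuous (fun g : OG n => g.1) := continuous_subtype_val

instance : IsTopologicalGroup (OG n) where
  continuous_mul := by
    apply Continuous.subtype_mk
    exact ((continuous_coe (n := n)).comp continuous_fst).matrix_mul
      ((continuous_coe (n := n)).comp continuous_snd)
  continuous_inv := by
    apply Continuous.subtype_mk
    exact (continuous_coe (n := n)).matrix_transpose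

lemma entry_le (g : OG n) (i j : Fin n) : g.1 i j ∈ Set.Icc (-1 : ℝ) 1 := by
  have h : (g.1ᵀ * g.1) j j = 1 := by rw [g.2]; simp
  rw [Matrix.mul_apply] at h
  have h1 : ∀ l : Fin n, (0:ℝ) ≤ g.1ᵀ j l * g.1 l j := by
    intro l; rw [Matrix.transpose_apply]; exact mul_self_nonneg _
  have h2 : g.1ᵀ j i * g.1 i j ≤ 1 := by
    rw [← h]; exact Finset.single_le_sum (fun l _ => h1 l) (Finset.mem_univ i)
  rw [Matrix.transpose_apply] at h2
  constructor <;> nlinarith [mul_self_nonneg (g.1 i j)]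

instance : CompactSpace (OG n) := by
  have hC : IsCompact ((Set.univ.pi fun _ : Fin n => Set.univ.pi fun _ : Fin n =>
      Set.Icc (-1:ℝ) 1) : Set (Fin n → Fin n → ℝ)) :=
    isCompact_univ_pi fun _ => isCompact_univ_pi fun _ => isCompact_Icc
  have hK : IsCompact {g : Mat n n | gᵀ * g = 1} := by
    refine IsCompact.of_isClosed_subset hC isClosed_carrier ?_
    intro g hg i _ j _
    exact entry_le ⟨g, hg⟩ i j
  exact isCompact_iff_compactSpace.mp hK

instance : Nonempty (OG n) := ⟨1⟩

def K₀ : TopologicalSpace.PositiveCompacts (OG n) :=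
  ⟨⟨Set.univ, isCompact_univ⟩, by rw [interior_univ]; exact Set.univ_nonempty⟩

def haarO (n : ℕ) : Measure (OG n) := Measure.haarMeasure K₀

instance : IsProbabilityMeasure (haarO n) :=
  ⟨by exact (Measure.haarMeasure_self (K₀ := (K₀ : TopologicalSpace.PositiveCompacts (OG n))))⟩

instance : (haarO n).IsMulLeftInvariant := by
  unfold haarO; infer_instance

instance : (haarO n).Regular := by unfold haarO; infer_instance

instance : (haarO n).IsHaarMeasure := by unfold haarO; infer_instance

instance : (haarO n).IsMulRightInvariant := by
  constructor
  intro h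
  have hmh : Measurable (fun x : OG n => x * h) := (continuous_mul_right h).measurable
  have hmap : (Measure.map (· * h) (haarO n)).IsMulLeftInvariant := by
    constructor
    intro g
    have hmg : Measurable (fun x : OG n => g * x) := (continuous_mul_left g).measurable
    rw [Measure.map_map hmg hmh]
    have : ((fun x : OG n => g * x) ∘ (fun x => x * h)) = ((fun x => x * h) ∘ (fun x => g * x)) := by
      ext x; simp [mul_assoc]
    rw [this, ← Measure.map_map hmh hmg, MeasureTheory.map_mul_left_eq_self (haarO n) g]
  have hprob : IsProbabilityMeasure (Measure.map (· * h) (haarO n)) :=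
    Measure.isProbabilityMeasure_map hmh.aemeasurable
  have heq := Measure.isMulInvariant_eq_smul_of_compactSpace (Measure.map (· * h) (haarO n)) (haarO n)
  have hfactor : (Measure.haarScalarFactor (Measure.map (· * h) (haarO n)) (haarO n) : ℝ≥0∞) = 1 := by
    have h1 := congrArg (fun μ : Measure (OG n) => μ Set.univ) heq
    simp only [Measure.smul_apply, measure_univ, ENNReal.smul_def, smul_eq_mul, mul_one] at h1
    exact h1.symm
  have hfactor' : Measure.haarScalarFactor (Measure.map (· * h) (haarO n)) (haarO n) = 1 :=
    ENNReal.coe_eq_one.mp hfactor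
  rw [heq, hfactor', one_smul]
end OG

section Trans
variable {n q : ℕ}

lemma dot_mulVec_self (v : Mat n q) (hv : vᵀ * v = 1) (x y : Fin q → ℝ) :
    (v.mulVec x) ⬝ᵥ (v.mulVec y) = x ⬝ᵥ y := by
  rw [Matrix.dotProduct_mulVec, ← Matrix.mulVec_transpose, Matrix.mulVec_mulVec, hv,
    Matrix.one_mulVec]

lemma inner_eq_dot (x y : EuclideanSpace ℝ (Fin q)) :
    ⟪x, y⟫ = (WithLp.equiv 2 _ x) ⬝ᵥ (WithLp.equiv 2 _ y) := by
  simp [PiLp.inner_apply, dotProduct, RCLike.inner_apply, mul_comm]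

def isomOfOrtho (v : Mat n q) (hv : vᵀ * v = 1) :
    EuclideanSpace ℝ (Fin q) →ₗᵢ[ℝ] EuclideanSpace ℝ (Fin n) where
  toLinearMap := Matrix.toEuclideanLin v
  norm_map' := by
    intro x
    rw [← Real.sqrt_sq (norm_nonneg ((Matrix.toEuclideanLin v) x)),
      ← Real.sqrt_sq (norm_nonneg x)]
    congr 1
    rw [← real_inner_self_eq_norm_sq, ← real_inner_self_eq_norm_sq]
    rw [inner_eq_dot, inner_eq_dot]
    simp only [WithLp.equiv_apply, Matrix.ofLp_toEuclideanLin_apply]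
    exact dot_mulVec_self v hv _ _

lemma isomOfOrtho_apply (v : Mat n q) (hv : vᵀ * v = 1) (x : EuclideanSpace ℝ (Fin q)) :
    WithLp.equiv 2 _ ((isomOfOrtho v hv) x) = v.mulVec (WithLp.equiv 2 _ x) := by
  simp [isomOfOrtho, WithLp.equiv_apply, Matrix.ofLp_toEuclideanLin_apply]

lemma exists_og (v w : Mat n q) (hv : vᵀ * v = 1) (hw : wᵀ * w = 1) :
    ∃ g : OG n, g.1 * v = w := by
  classical
  set T₁ := isomOfOrtho v hv
  set T₂ := isomOfOrtho w hw
  set S : Submodule ℝ (EuclideanSpace ℝ (Fin n)) := LinearMap.range T₁.toLinearMap with hS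
  have hinj : Function.Injective T₁.toLinearMap := T₁.injective
  set e : EuclideanSpace ℝ (Fin q) ≃ₗ[ℝ] S := LinearEquiv.ofInjective T₁.toLinearMap hinj with he
  have he_apply : ∀ x, ((e x : EuclideanSpace ℝ (Fin n))) = T₁ x := fun x => rfl
  set L : S →ₗᵢ[ℝ] EuclideanSpace ℝ (Fin n) :=
    { toLinearMap := T₂.toLinearMap ∘ₗ (e.symm : S →ₗ[ℝ] EuclideanSpace ℝ (Fin q))
      norm_map' := by
        intro s
        simp only [LinearMap.coe_comp, Function.comp_apply, LinearEquiv.coe_coe,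
          LinearIsometry.coe_toLinearMap, T₂.norm_map]
        conv_rhs => rw [← e.apply_symm_apply s]
        rw [← Submodule.norm_coe (e (e.symm s)), he_apply, T₁.norm_map] } with hL
  set U : EuclideanSpace ℝ (Fin n) →ₗᵢ[ℝ] EuclideanSpace ℝ (Fin n) := L.extend with hU
  have hUT : ∀ x : EuclideanSpace ℝ (Fin q), U (T₁ x) = T₂ x := by
    intro x
    have h1 : T₁ x = ((e x : S) : EuclideanSpace ℝ (Fin n)) := (he_apply x).symm
    rw [h1, L.extend_apply]
    show T₂ (e.symm (e x)) = T₂ x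
    rw [e.symm_apply_apply]
  set g : Mat n n := Matrix.toEuclideanLin.symm U.toLinearMap with hg
  have hgU : ∀ x : EuclideanSpace ℝ (Fin n), Matrix.toEuclideanLin g x = U x := by
    intro x
    rw [hg, LinearEquiv.apply_symm_apply]
    rfl
  have hgmulVec : ∀ x : Fin n → ℝ, g.mulVec x =
      WithLp.equiv 2 _ (U ((WithLp.equiv 2 (Fin n → ℝ)).symm x)) := by
    intro x
    rw [← hgU]
    rw [WithLp.equiv_apply, Matrix.ofLp_toEuclideanLin_apply]
    simp
  have hg_orth : gᵀ * g = 1 := by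
    ext i j
    have hcol : ∀ (j : Fin n) (l : Fin n), g l j =
        WithLp.equiv 2 _ (U ((WithLp.equiv 2 (Fin n → ℝ)).symm (Pi.single j 1))) l := by
      intro j l
      have := congrFun (hgmulVec (Pi.single j (1:ℝ))) l
      rw [Matrix.mulVec_single] at this
      simpa using this
    have : (gᵀ * g) i j = (WithLp.equiv 2 _ (U ((WithLp.equiv 2 (Fin n → ℝ)).symm (Pi.single i 1))))
        ⬝ᵥ (WithLp.equiv 2 _ (U ((WithLp.equiv 2 (Fin n → ℝ)).symm (Pi.single j 1)))) := by
      rw [Matrix.mul_apply]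
      simp only [Matrix.transpose_apply, dotProduct]
      exact Finset.sum_congr rfl fun l _ => by rw [hcol i l, hcol j l]
    rw [this, ← inner_eq_dot, LinearIsometry.inner_map_map, inner_eq_dot]
    by_cases hij : i = j
    · subst hij; simp [Matrix.one_apply, dotProduct, Pi.single_apply]
    · simp [Matrix.one_apply, hij, dotProduct, Pi.single_apply, Finset.sum_ite_eq]
      exact fun h => hij h.symm
  refine ⟨⟨g, hg_orth⟩, ?_⟩
  ext i j
  have hcolv : (fun l => v l j) = v.mulVec (Pi.single j 1) := by
    ext l; rw [Matrix.mulVec_single]; simp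
  have h1 : (g * v) i j = (g.mulVec fun l => v l j) i := by
    rw [Matrix.mul_apply]; rfl
  rw [h1, hcolv, hgmulVec]
  have h2 : v.mulVec (Pi.single j 1) =
      WithLp.equiv 2 _ (T₁ ((WithLp.equiv 2 (Fin q → ℝ)).symm (Pi.single j 1))) := by
    rw [isomOfOrtho_apply]; simp
  rw [h2, Equiv.symm_apply_apply, hUT, isomOfOrtho_apply]
  simp [Matrix.mulVec_single]
end Trans


section Rep
variable {n q : ℕ}

lemma continuous_phi (v : Mat n q) : Continuous (fun g : OG n => g.1 * v) :=
  (continuous_subtype_val).matrix_mul continuous_const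

lemma measurable_phi (v : Mat n q) : Measurable (fun g : OG n => g.1 * v) :=
  (continuous_phi v).measurable

lemma measurable_joint {q : ℕ} : Measurable (fun p : OG n × Mat n q => p.1.1 * p.2) :=
  ((continuous_subtype_val.comp continuous_fst).matrix_mul continuous_snd).measurable

lemma stiefel_eq_map (μ : Measure (Mat n q)) [IsProbabilityMeasure μ]
    (hconc : μ {v : Mat n q | vᵀ * v = 1}ᶜ = 0)
    (hinv : ∀ g : Mat n n, gᵀ * g = 1 → Measure.map (fun v : Mat n q => g * v) μ = μ)
    (v₀ : Mat n q) (hv₀ : v₀ᵀ * v₀ = 1) :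
    μ = Measure.map (fun g : OG n => g.1 * v₀) (OG.haarO n) := by
  have hae : ∀ᵐ v ∂μ, vᵀ * v = 1 := by
    rw [ae_iff]; rw [Set.compl_setOf] at hconc; exact hconc
  ext A hA
  have step1 : ∀ g : OG n, μ A = μ ((fun v : Mat n q => g.1 * v) ⁻¹' A) := by
    intro g
    have hm : Measurable (fun v : Mat n q => g.1 * v) :=
      (continuous_const.matrix_mul continuous_id).measurable
    conv_lhs => rw [← hinv g.1 g.2]
    exact Measure.map_apply hm hA
  calc μ A = ∫⁻ _, μ A ∂(OG.haarO n) := by rw [lintegral_const, measure_univ, mul_one]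
    _ = ∫⁻ g : OG n, ∫⁻ v, A.indicator (1 : Mat n q → ℝ≥0∞) (g.1 * v) ∂μ ∂(OG.haarO n) := by
        refine lintegral_congr fun g => ?_
        have hm : Measurable (fun v : Mat n q => g.1 * v) :=
          (continuous_const.matrix_mul continuous_id).measurable
        have heq : ∀ v : Mat n q, A.indicator (1 : Mat n q → ℝ≥0∞) (g.1 * v) =
            ((fun v : Mat n q => g.1 * v) ⁻¹' A).indicator (1 : Mat n q → ℝ≥0∞) v := by
          intro v; by_cases h : g.1 * v ∈ A <;> simp [Set.indicator_apply, h]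
        rw [lintegral_congr heq, lintegral_indicator_one (hm hA)]
        exact step1 g
    _ = ∫⁻ v, ∫⁻ g : OG n, A.indicator (1 : Mat n q → ℝ≥0∞) (g.1 * v) ∂(OG.haarO n) ∂μ := by
        apply lintegral_lintegral_swap
        exact ((measurable_one.indicator hA).comp measurable_joint).aemeasurable
    _ = ∫⁻ v, (OG.haarO n) ((fun g : OG n => g.1 * v) ⁻¹' A) ∂μ := by
        refine lintegral_congr fun v => ?_
        have heq : ∀ g : OG n, A.indicator (1 : Mat n q → ℝ≥0∞) (g.1 * v) =
            ((fun g : OG n => g.1 * v) ⁻¹' A).indicator (1 : OG n → ℝ≥0∞) g := by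
          intro g; by_cases h : g.1 * v ∈ A <;> simp [Set.indicator_apply, h]
        rw [lintegral_congr heq, lintegral_indicator_one ((measurable_phi v) hA)]
    _ = ∫⁻ _, (OG.haarO n) ((fun g : OG n => g.1 * v₀) ⁻¹' A) ∂μ := by
        refine lintegral_congr_ae ?_
        filter_upwards [hae] with v hv
        obtain ⟨h, hh⟩ := exists_og v₀ v hv₀ hv
        have hset : (fun g : OG n => g.1 * v) ⁻¹' A =
            (fun g : OG n => g * h) ⁻¹' ((fun g : OG n => g.1 * v₀) ⁻¹' A) := by
          ext g
          simp only [Set.mem_preimage, OG.coe_mul, Matrix.mul_assoc, hh]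
        rw [hset, measure_preimage_mul_right]
    _ = (OG.haarO n) ((fun g : OG n => g.1 * v₀) ⁻¹' A) := by
        rw [lintegral_const, measure_univ, mul_one]
    _ = Measure.map (fun g : OG n => g.1 * v₀) (OG.haarO n) A := by
        rw [Measure.map_apply (measurable_phi v₀) hA]
end Rep

section Sep
variable {n q : ℕ}

lemma isClosed_stiefel : IsClosed {v : Mat n q | vᵀ * v = 1} :=
  isClosed_eq ((continuous_id.matrix_transpose).matrix_mul continuous_id) continuous_const

lemma phi_mem_stiefel (u₀ : Mat n q) (hu₀ : u₀ᵀ * u₀ = 1) (g : OG n) :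
    (g.1 * u₀)ᵀ * (g.1 * u₀) = 1 := by
  rw [Matrix.transpose_mul, Matrix.mul_assoc, ← Matrix.mul_assoc g.1ᵀ, g.2, Matrix.one_mul, hu₀]

lemma ae_of_haar_ae (u₀ : Mat n q) (hu₀ : u₀ᵀ * u₀ = 1) (P : Mat n q → Prop)
    (hmeas : MeasurableSet {g : OG n | ¬ P (g.1 * u₀)})
    (hnull : (OG.haarO n) {g : OG n | ¬ P (g.1 * u₀)} = 0) :
    ∀ᵐ u ∂(Measure.map (fun g : OG n => g.1 * u₀) (OG.haarO n)), P u := by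
  set φ := fun g : OG n => g.1 * u₀ with hφ
  set N := {g : OG n | ¬ P (φ g)} with hN
  have hA1 : MeasureTheory.AnalyticSet (φ '' N) :=
    (hmeas.analyticSet).image_of_continuous (continuous_phi u₀)
  have hA2 : MeasureTheory.AnalyticSet (φ '' Nᶜ) :=
    (hmeas.compl.analyticSet).image_of_continuous (continuous_phi u₀)
  have hdisj : Disjoint (φ '' N) (φ '' Nᶜ) := by
    rw [Set.disjoint_left]
    rintro u ⟨g, hg, rfl⟩ ⟨g', hg', hgg'⟩
    exact hg (hgg' ▸ (not_not.mp fun h => hg' h))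
  obtain ⟨E, hNE, hdisjE, hEmeas⟩ := hA1.measurablySeparable hA2 hdisj
  rw [ae_iff]
  have hsub : {u | ¬ P u} ⊆ E ∪ (Set.range φ)ᶜ := by
    intro u hu
    by_cases hr : u ∈ Set.range φ
    · obtain ⟨g, rfl⟩ := hr; exact Or.inl (hNE ⟨g, hu, rfl⟩)
    · exact Or.inr hr
  refine measure_mono_null hsub (measure_union_null ?_ ?_)
  · rw [Measure.map_apply (measurable_phi u₀) hEmeas]
    refine measure_mono_null ?_ hnull
    intro g hg
    by_contra hgN
    exact Set.disjoint_right.mp hdisjE hg ⟨g, hgN, rfl⟩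
  · have hrsub : (Set.range φ)ᶜ ⊆ {u : Mat n q | uᵀ * u = 1}ᶜ := by
      intro u hu hS
      obtain ⟨g, hg⟩ := exists_og u₀ u hu₀ hS
      exact hu ⟨g, hg⟩
    refine measure_mono_null hrsub ?_
    rw [Measure.map_apply (measurable_phi u₀) isClosed_stiefel.measurableSet.compl]
    have : φ ⁻¹' ({u : Mat n q | uᵀ * u = 1}ᶜ) = ∅ := by
      refine Set.eq_empty_of_forall_notMem fun g hg => ?_
      exact hg (phi_mem_stiefel u₀ hu₀ g)
    rw [this, measure_empty]

lemma exists_base (hq : q ≤ n) : ∃ u₀ : Mat n q, u₀ᵀ * u₀ = 1 := by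
  refine ⟨(1 : Matrix (Fin n) (Fin n) ℝ).submatrix id (Fin.castLE hq), ?_⟩
  ext a b
  rw [Matrix.mul_apply]
  simp only [Matrix.transpose_apply, Matrix.submatrix_apply, id_eq, Matrix.one_apply]
  by_cases h : a = b
  · subst h
    rw [Finset.sum_eq_single (Fin.castLE hq a)] <;> simp +contextual
  · have h' : Fin.castLE hq a ≠ Fin.castLE hq b := by
      simpa [Fin.castLE_inj] using h
    rw [Finset.sum_eq_zero, if_neg h]
    intro i _
    by_cases hia : i = Fin.castLE hq a <;> by_cases hib : i = Fin.castLE hq b <;>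
      simp_all
end Sep

section Key
variable {n : ℕ}

/-- Key Tonelli identity. -/
lemma lint_key {q : ℕ} (μ : Measure (Mat n q)) [IsProbabilityMeasure μ]
    (hconc : μ {v : Mat n q | vᵀ * v = 1}ᶜ = 0)
    (hinv : ∀ g : Mat n n, gᵀ * g = 1 → Measure.map (fun v : Mat n q => g * v) μ = μ)
    (ν₀ : Measure (Mat n q)) [IsProbabilityMeasure ν₀]
    (hν₀ : ∀ᵐ w ∂ν₀, wᵀ * w = 1)
    (F : Mat n q → ℝ≥0∞) (hF : Measurable F) :
    ∫⁻ g : OG n, ∫⁻ w, F (g.1 * w) ∂ν₀ ∂(OG.haarO n) = ∫⁻ v, F v ∂μ := by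
  have hmeas : AEMeasurable (Function.uncurry fun (g : OG n) (w : Mat n q) => F (g.1 * w))
      ((OG.haarO n).prod ν₀) := (hF.comp measurable_joint).aemeasurable
  rw [lintegral_lintegral_swap hmeas]
  have h1 : ∀ᵐ w ∂ν₀, ∫⁻ g : OG n, F (g.1 * w) ∂(OG.haarO n) = ∫⁻ v, F v ∂μ := by
    filter_upwards [hν₀] with w hw
    rw [stiefel_eq_map μ hconc hinv w hw, lintegral_map hF (measurable_phi w)]
  rw [lintegral_congr_ae h1, lintegral_const, measure_univ, mul_one]

/-- Continuity of the descended integral function for continuous bounded integrands. -/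
lemma continuousOn_int {k q : ℕ} (u₀ : Mat n k) (hu₀ : u₀ᵀ * u₀ = 1)
    (ν : Mat n k → Measure (Mat n q)) (hνp : ∀ u, IsProbabilityMeasure (ν u))
    (hνinv : ∀ g : Mat n n, gᵀ * g = 1 → ∀ u,
      Measure.map (fun w : Mat n q => g * w) (ν u) = ν (g * u))
    (f0 : Mat n q → ℂ) (hc : Continuous f0) (C : ℝ) (hb : ∀ x, ‖f0 x‖ ≤ C) :
    ContinuousOn (fun u => ∫ v, f0 v ∂ν u) {u : Mat n k | uᵀ * u = 1} := by
  haveI := hνp u₀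
  rw [continuousOn_iff_continuous_restrict]
  set S := {u : Mat n k | uᵀ * u = 1}
  set φ' : OG n → S := fun g => ⟨g.1 * u₀, phi_mem_stiefel u₀ hu₀ g⟩ with hφ'
  have hφ'c : Continuous φ' := Continuous.subtype_mk (continuous_phi u₀) _
  have hφ's : Function.Surjective φ' := by
    rintro ⟨u, hu⟩
    obtain ⟨g, hg⟩ := exists_og u₀ u hu₀ hu
    exact ⟨g, Subtype.ext hg⟩
  have hquot : IsQuotientMap φ' := hφ'c.isClosedMap.isQuotientMap hφ'c hφ's
  rw [hquot.continuous_iff]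
  have heq : (S.domRestrict (fun u => ∫ v, f0 v ∂ν u)) ∘ φ' =
      fun g : OG n => ∫ w, f0 (g.1 * w) ∂ν u₀ := by
    ext g
    show ∫ v, f0 v ∂ν (g.1 * u₀) = ∫ w, f0 (g.1 * w) ∂ν u₀
    have hm : Measurable (fun w : Mat n q => g.1 * w) :=
      (continuous_const.matrix_mul continuous_id).measurable
    rw [← hνinv g.1 g.2 u₀, integral_map hm.aemeasurable hc.measurable.aestronglyMeasurable]
  rw [heq]
  refine continuous_of_dominated (bound := fun _ => C) ?_ ?_ ?_ ?_
  · intro g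
    exact ((hc.comp (continuous_const.matrix_mul continuous_id)).measurable).aestronglyMeasurable
  · intro g
    exact Filter.Eventually.of_forall fun w => hb _
  · exact integrable_const C
  · exact Filter.Eventually.of_forall fun w =>
      hc.comp ((continuous_phi (n := n) w).comp continuous_id)
end Key

theorem funk_transform_l1 (n m k : ℕ) (h1k : 1 ≤ k) (hk : k ≤ n - 1)
    (h1m : 1 ≤ m) (hm : m ≤ n - 1) (hkm : k + m ≤ n)
    (μk : Measure (Mat n k)) (μm : Measure (Mat n m))
    (hμk : IsStiefelMeasure n k μk) (hμm : IsStiefelMeasure n m μm)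
    (ν : Mat n k → Measure (Mat n m)) (hν : IsFunkFamily n k m ν)
    (f : Mat n m → ℂ) (hfm : Measurable f) (hf : Integrable f μm) :
    (∀ᵐ u ∂μk, Integrable f (ν u)) ∧
    ∫ u, (∫ v, f v ∂ν u) ∂μk = ∫ v, f v ∂μm := by

  obtain ⟨hkprob, hkconc, hkinv⟩ := hμk
  obtain ⟨hmprob, hmconc, hminv⟩ := hμm
  obtain ⟨hνprob, hνconc, hνinv⟩ := hν
  haveI := hkprob; haveI := hmprob
  have hkn : k ≤ n := by omega
  obtain ⟨u₀, hu₀⟩ := exists_base (n := n) (q := k) hkn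
  haveI := hνprob u₀
  have hμk_map : μk = Measure.map (fun g : OG n => g.1 * u₀) (OG.haarO n) :=
    stiefel_eq_map μk hkconc hkinv u₀ hu₀
  have hν₀S : ∀ᵐ w ∂(ν u₀), wᵀ * w = 1 := by
    have hsub : {w : Mat n m | wᵀ * w = 1}ᶜ ⊆ {w : Mat n m | wᵀ * w = 1 ∧ u₀ᵀ * w = 0}ᶜ := by
      intro w hw hmem; exact hw hmem.1
    have h0 := measure_mono_null hsub (hνconc u₀)
    rw [ae_iff]; rw [Set.compl_setOf] at h0; exact h0
  have key : ∀ F : Mat n m → ℝ≥0∞, Measurable F →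
      ∫⁻ g : OG n, ∫⁻ w, F (g.1 * w) ∂(ν u₀) ∂(OG.haarO n) = ∫⁻ v, F v ∂μm :=
    fun F hF => lint_key μm hmconc hminv (ν u₀) hν₀S F hF
  have happrox : ∀ j : ℕ, ∃ f' : Mat n m → ℂ, HasCompactSupport f' ∧
      (∫⁻ x, ‖f x - f' x‖₊ ∂μm) ≤ 2⁻¹ ^ j ∧ Continuous f' ∧ Integrable f' μm :=
    fun j => hf.exists_hasCompactSupport_lintegral_sub_le
      (pow_ne_zero j (by norm_num : (2⁻¹ : ℝ≥0∞) ≠ 0))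
  choose fseq hfs_supp hfs_lint hfs_cont hfs_int using happrox
  have hfs_bdd : ∀ j, ∃ C, ∀ x, ‖fseq j x‖ ≤ C := fun j =>
    (hfs_cont j).bounded_above_of_compact_support (hfs_supp j)
  choose Cb hCb using hfs_bdd
  set H : OG n → ℝ≥0∞ := fun g => ∫⁻ w, (‖f (g.1 * w)‖₊ : ℝ≥0∞) ∂(ν u₀) with hH
  set Hj : ℕ → OG n → ℝ≥0∞ :=
    fun j g => ∫⁻ w, (‖f (g.1 * w) - fseq j (g.1 * w)‖₊ : ℝ≥0∞) ∂(ν u₀) with hHj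
  have hjointm : ∀ (φ : Mat n m → ℂ), Measurable φ →
      Measurable fun p : OG n × Mat n m => φ (p.1.1 * p.2) :=
    fun φ hφ => hφ.comp measurable_joint
  have hHmeas : Measurable H :=
    Measurable.lintegral_prod_right' ((hjointm f hfm).nnnorm.coe_nnreal_ennreal)
  have hHjmeas : ∀ j, Measurable (Hj j) := fun j =>
    Measurable.lintegral_prod_right'
      (((hjointm f hfm).sub (hjointm _ (hfs_cont j).measurable)).nnnorm.coe_nnreal_ennreal)
  have hmul : ∀ g : OG n, Measurable (fun w : Mat n m => g.1 * w) := fun g =>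
    (continuous_const.matrix_mul continuous_id).measurable
  have hrw : ∀ (φ : Mat n m → ℂ), Measurable φ → ∀ g : OG n,
      ∫⁻ v, (‖φ v‖₊ : ℝ≥0∞) ∂(ν (g.1 * u₀)) = ∫⁻ w, (‖φ (g.1 * w)‖₊ : ℝ≥0∞) ∂(ν u₀) := by
    intro φ hφ g
    rw [← hνinv g.1 g.2 u₀, lintegral_map hφ.nnnorm.coe_nnreal_ennreal (hmul g)]
  set P : Mat n k → Prop := fun u =>
    (∫⁻ v, (‖f v‖₊ : ℝ≥0∞) ∂(ν u)) < ⊤ ∧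
      (∑' j, ∫⁻ v, (‖f v - fseq j v‖₊ : ℝ≥0∞) ∂(ν u)) ≠ ⊤ with hP
  have hNset : {g : OG n | ¬ P (g.1 * u₀)} =
      {g : OG n | ¬ (H g < ⊤ ∧ (∑' j, Hj j g) ≠ ⊤)} := by
    ext g
    simp only [Set.mem_setOf_eq, hP]
    rw [hrw f hfm g,
      tsum_congr (fun j => hrw (fun v => f v - fseq j v)
        (hfm.sub (hfs_cont j).measurable) g)]
  have hNmeas : MeasurableSet {g : OG n | ¬ P (g.1 * u₀)} := by
    rw [hNset]
    have hs : {g : OG n | ¬ (H g < ⊤ ∧ (∑' j, Hj j g) ≠ ⊤)} =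
        ({g | H g < ⊤} ∩ {g | (∑' j, Hj j g) ≠ ⊤})ᶜ := by
      ext g; simp [Set.mem_setOf_eq]
    rw [hs]
    exact ((hHmeas measurableSet_Iio).inter
      (((Measurable.ennreal_tsum hHjmeas) (measurableSet_singleton ⊤).compl))).compl
  have hNnull : (OG.haarO n) {g : OG n | ¬ P (g.1 * u₀)} = 0 := by
    rw [hNset]
    have h1 : ∀ᵐ g ∂(OG.haarO n), H g < ⊤ := by
      apply ae_lt_top hHmeas
      rw [hH]
      rw [key (fun v => (‖f v‖₊ : ℝ≥0∞)) hfm.nnnorm.coe_nnreal_ennreal]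
      exact hf.2.ne
    have h2 : ∀ᵐ g ∂(OG.haarO n), (∑' j, Hj j g) ≠ ⊤ := by
      have hsum : ∫⁻ g, (∑' j, Hj j g) ∂(OG.haarO n) ≠ ⊤ := by
        rw [lintegral_tsum (fun j => (hHjmeas j).aemeasurable)]
        have hle : ∀ j, ∫⁻ g, Hj j g ∂(OG.haarO n) ≤ 2⁻¹ ^ j := by
          intro j
          rw [hHj]
          rw [key (fun v => (‖f v - fseq j v‖₊ : ℝ≥0∞))
            (hfm.sub (hfs_cont j).measurable).nnnorm.coe_nnreal_ennreal]
          exact hfs_lint j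
        refine ne_top_of_le_ne_top ?_ (ENNReal.tsum_le_tsum hle)
        rw [ENNReal.tsum_geometric, ENNReal.one_sub_inv_two]
        simp
      filter_upwards [ae_lt_top (Measurable.ennreal_tsum hHjmeas) hsum] with g hg
      exact hg.ne
    have h12 := h1.and h2
    rw [ae_iff] at h12
    exact h12
  have hPae : ∀ᵐ u ∂μk, P u := by
    rw [hμk_map]; exact ae_of_haar_ae u₀ hu₀ P hNmeas hNnull
  constructor
  · filter_upwards [hPae] with u hu
    exact ⟨hfm.aestronglyMeasurable, hu.1⟩
  · set F : Mat n k → ℂ := fun u => ∫ v, f v ∂ν u with hF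
    set Fj : ℕ → Mat n k → ℂ := fun j u => ∫ v, fseq j v ∂ν u with hFj
    have hμkS : ∀ᵐ u ∂μk, u ∈ {u : Mat n k | uᵀ * u = 1} := by
      rw [ae_iff]
      rw [← Set.compl_def]
      exact hkconc
    have hrestrict : μk.restrict {u : Mat n k | uᵀ * u = 1} = μk :=
      Measure.restrict_eq_self_of_ae_mem hμkS
    have hFjm : ∀ j, AEStronglyMeasurable (Fj j) μk := by
      intro j
      rw [← hrestrict]
      exact (continuousOn_int u₀ hu₀ ν hνprob hνinv (fseq j) (hfs_cont j) (Cb j)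
        (hCb j)).aestronglyMeasurable isClosed_stiefel.measurableSet
    have hint_fseq : ∀ j u, Integrable (fseq j) (ν u) := by
      intro j u; haveI := hνprob u
      exact ⟨(hfs_cont j).measurable.aestronglyMeasurable,
        HasFiniteIntegral.of_bounded (C := Cb j) (Filter.Eventually.of_forall fun v => hCb j v)⟩
    have hTend : ∀ᵐ u ∂μk, Filter.Tendsto (fun j => Fj j u) Filter.atTop (𝓝 (F u)) := by
      filter_upwards [hPae] with u hu
      haveI := hνprob u
      have hfint : Integrable f (ν u) := ⟨hfm.aestronglyMeasurable, hu.1⟩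
      rw [tendsto_iff_norm_sub_tendsto_zero]
      have hbound : ∀ j, ‖Fj j u - F u‖ ≤ (∫⁻ v, (‖f v - fseq j v‖₊ : ℝ≥0∞) ∂ν u).toReal := by
        intro j
        have heq : Fj j u - F u = ∫ v, (fseq j v - f v) ∂ν u :=
          (integral_sub (hint_fseq j u) hfint).symm
        rw [heq]
        refine le_trans (norm_integral_le_lintegral_norm _) ?_
        apply le_of_eq
        congr 1
        refine lintegral_congr fun v => ?_
        rw [ofReal_norm, ← enorm_neg]
        simp [neg_sub]; rfl
      have hfin : ∀ j, (∫⁻ v, (‖f v - fseq j v‖₊ : ℝ≥0∞) ∂ν u) ≠ ⊤ := fun j =>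
        ne_top_of_le_ne_top hu.2 (ENNReal.le_tsum j)
      have hto0 : Filter.Tendsto
          (fun j => (∫⁻ v, (‖f v - fseq j v‖₊ : ℝ≥0∞) ∂ν u).toReal) Filter.atTop (𝓝 0) := by
        have h0 : Filter.Tendsto (fun j => ∫⁻ v, (‖f v - fseq j v‖₊ : ℝ≥0∞) ∂ν u)
            Filter.atTop (𝓝 0) := ENNReal.tendsto_atTop_zero_of_tsum_ne_top hu.2
        have := (ENNReal.tendsto_toReal (a := 0) (by simp)).comp h0
        exact this
      exact squeeze_zero (fun j => norm_nonneg _) hbound hto0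
    have hFmeas : AEStronglyMeasurable F μk :=
      aestronglyMeasurable_of_tendsto_ae Filter.atTop hFjm hTend
    have hFmeas' : AEStronglyMeasurable F
        (Measure.map (fun g : OG n => g.1 * u₀) (OG.haarO n)) := by
      rw [← hμk_map]; exact hFmeas
    have hprod : Integrable (Function.uncurry fun (g : OG n) (w : Mat n m) => f (g.1 * w))
        ((OG.haarO n).prod (ν u₀)) := by
      refine ⟨((hfm.comp measurable_joint)).aestronglyMeasurable, ?_⟩
      show (∫⁻ p : OG n × Mat n m, (‖f (p.1.1 * p.2)‖₊ : ℝ≥0∞) ∂((OG.haarO n).prod (ν u₀))) < ⊤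
      have hpm : AEMeasurable (fun p : OG n × Mat n m => (‖f (p.1.1 * p.2)‖₊ : ℝ≥0∞))
          ((OG.haarO n).prod (ν u₀)) := ((hjointm f hfm).nnnorm.coe_nnreal_ennreal).aemeasurable
      rw [lintegral_prod _ hpm]
      rw [key (fun v => (‖f v‖₊ : ℝ≥0∞)) hfm.nnnorm.coe_nnreal_ennreal]
      exact hf.2
    calc ∫ u, F u ∂μk = ∫ g : OG n, F (g.1 * u₀) ∂(OG.haarO n) := by
          rw [hμk_map, integral_map (measurable_phi u₀).aemeasurable hFmeas']
      _ = ∫ g : OG n, ∫ w, f (g.1 * w) ∂ν u₀ ∂(OG.haarO n) := by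
          refine integral_congr_ae (Filter.Eventually.of_forall fun g => ?_)
          show (∫ v, f v ∂ν (g.1 * u₀)) = _
          rw [← hνinv g.1 g.2 u₀, integral_map (hmul g).aemeasurable hfm.aestronglyMeasurable]
      _ = ∫ w, ∫ g : OG n, f (g.1 * w) ∂(OG.haarO n) ∂ν u₀ := integral_integral_swap hprod
      _ = ∫ w, (∫ v, f v ∂μm) ∂ν u₀ := by
          refine integral_congr_ae ?_
          filter_upwards [hν₀S] with w hw
          conv_rhs => rw [stiefel_eq_map μm hmconc hminv w hw]
          rw [integral_map (measurable_phi w).aemeasurable hfm.aestronglyMeasurable]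
      _ = ∫ v, f v ∂μm := by
          rw [integral_const, probReal_univ, one_smul]

end
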